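/- arXiv:1105.3397 — 2 statements merged into one kernel-verified Lean document; each statement's English description precedes it below -/
import Mathlib

section
/- For all λ ∈ ℂ with φ_q(λ) ≠ 0: 4(1 − Δ(λ)²)(1 + A(λ))² + J(λ)² = 4(1 − Δ(λ)²) + 4(1 − Δ(λ)²)(1 + Ã(λ))² + J̃(λ)². -/
/-- `y` solves the Jacobi equation `a_{n-1} y_{n-1} + a_n y_{n+1} + b_n y_n = λ y_n` on `ℤ`. -/
def JacobiSol (a b : ℤ → ℂ) (lam : ℂ) (y : ℤ → ℂ) : Prop :=
  ∀ n : ℤ, a (n - 1) * y (n - 1) + a n * y (n + 1) + b n * y n = lam * y n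

/-- The Wronskian `{f,g}_n = a_n (f_n g_{n+1} - f_{n+1} g_n)`. -/
def Wron (a : ℤ → ℂ) (f g : ℤ → ℂ) (n : ℤ) : ℂ :=
  a n * (f n * g (n + 1) - f (n + 1) * g n)

lemma wron_step (a b : ℤ → ℂ) (lam : ℂ) (f g : ℤ → ℂ)
    (hf : JacobiSol a b lam f) (hg : JacobiSol a b lam g) (n : ℤ) :
    Wron a f g (n + 1) = Wron a f g n := by
  have Hf := hf (n + 1)
  have Hg := hg (n + 1)
  simp only [add_sub_cancel_right] at Hf Hg
  unfold Wron
  linear_combination f (n + 1) * Hg - g (n + 1) * Hf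

lemma wron_const (a b : ℤ → ℂ) (lam : ℂ) (f g : ℤ → ℂ)
    (hf : JacobiSol a b lam f) (hg : JacobiSol a b lam g) (k : ℕ) :
    Wron a f g (k : ℤ) = Wron a f g 0 := by
  induction k with
  | zero => norm_num
  | succ m ih =>
      have : ((m + 1 : ℕ) : ℤ) = (m : ℤ) + 1 := by push_cast; ring
      rw [this, wron_step a b lam f g hf hg, ih]

set_option maxHeartbeats 1000000 in
theorem key_alg (P T Y1 T1 x X y Y r t : ℂ) (hP : P ≠ 0)
    (h1 : T * Y1 - T1 * P = 1) (h2 : r * (x * Y - X * y) = 1) :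
    4*(1 - ((Y1+T)/2)^2)*(1 + ((1/2)*(r*Y + t*y + x) - 1))^2
      + (-(r*P*X + ((Y1-T)/2)*(r*Y - x) + t*(P*x + ((Y1-T)/2)*y) + T1*y))^2
  = 4*(1 - ((Y1+T)/2)^2)
      + 4*(1 - ((Y1+T)/2)^2)*(1 + ((1/2)*(r*Y + t*y - x - (2*((Y1-T)/2)/P)*y) - 1))^2
      + (-(r*P*X + ((Y1-T)/2)*(r*Y - x) + t*(P*x + ((Y1-T)/2)*y)
          - ((((Y1-T)/2)^2 - (1 - ((Y1+T)/2)^2))/P)*y))^2 := by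
  field_simp
  linear_combination
    (16 * (2*y*(-(r*P*X + ((Y1-T)/2)*(r*Y - x) + t*(P*x + ((Y1-T)/2)*y) + T1*y))*P
       - y^2*(T*Y1 - T1*P - 1))) * h1
    + (16 * 4 * (1 - ((Y1+T)/2)^2) * P^2) * h2

/-- `4(1−Δ²)(1+A)² + J² = 4(1−Δ²) + 4(1−Δ²)(1+Ã)² + J̃²` for all `λ` with `φ_q(λ) ≠ 0`. -/
theorem A_J_tilde_identity
    (q : ℕ) (hq : 2 ≤ q) (a0 b0 : ℤ → ℝ)
    (hpa : ∀ n : ℤ, a0 (n + (q : ℤ)) = a0 n) (hpb : ∀ n : ℤ, b0 (n + (q : ℤ)) = b0 n)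
    (ha0 : ∀ n : ℤ, 0 < a0 n) (hprod : ∏ j ∈ Finset.Icc (1 : ℤ) (q : ℤ), a0 j = 1)
    (θ φ : ℂ → ℤ → ℂ)
    (hθ : ∀ lam : ℂ, JacobiSol (fun n => (a0 n : ℂ)) (fun n => (b0 n : ℂ)) lam (θ lam))
    (hθ0 : ∀ lam : ℂ, θ lam 0 = 1) (hθ1 : ∀ lam : ℂ, θ lam 1 = 0)
    (hφ : ∀ lam : ℂ, JacobiSol (fun n => (a0 n : ℂ)) (fun n => (b0 n : ℂ)) lam (φ lam))
    (hφ0 : ∀ lam : ℂ, φ lam 0 = 0) (hφ1 : ∀ lam : ℂ, φ lam 1 = 1)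
    (p : ℕ) (hp : 1 ≤ p) (u v : ℤ → ℝ)
    (hsupp : ∀ n : ℤ, (n < 0 ∨ (p : ℤ) < n) → u n = 0 ∧ v n = 0)
    (hapos : ∀ n : ℤ, 0 < a0 n + u n)
    (Θp Φp : ℂ → ℤ → ℂ)
    (hΘp : ∀ lam : ℂ, JacobiSol (fun n => ((a0 n + u n : ℝ) : ℂ))
      (fun n => ((b0 n + v n : ℝ) : ℂ)) lam (Θp lam))
    (hΘpb : ∀ lam : ℂ, ∀ n : ℤ, (p : ℤ) + 1 ≤ n → Θp lam n = θ lam n)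
    (hΦp : ∀ lam : ℂ, JacobiSol (fun n => ((a0 n + u n : ℝ) : ℂ))
      (fun n => ((b0 n + v n : ℝ) : ℂ)) lam (Φp lam))
    (hΦpb : ∀ lam : ℂ, ∀ n : ℤ, (p : ℤ) + 1 ≤ n → Φp lam n = φ lam n)
    :
    ∀ lam : ℂ, φ lam (q : ℤ) ≠ 0 →
      (let Δv : ℂ := (φ lam ((q : ℤ) + 1) + θ lam (q : ℤ)) / 2
       let ϕv : ℂ := (φ lam ((q : ℤ) + 1) - θ lam (q : ℤ)) / 2
       let r : ℂ := ((a0 0 + u 0 : ℝ) : ℂ) / ((a0 0 : ℝ) : ℂ)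
       let t : ℂ := ((v 0 : ℝ) : ℂ) / ((a0 0 : ℝ) : ℂ)
       let Av : ℂ := (1 / 2) * (r * Φp lam 1 + t * Φp lam 0 + Θp lam 0) - 1
       let Jv : ℂ := -(r * φ lam (q : ℤ) * Θp lam 1 + ϕv * (r * Φp lam 1 - Θp lam 0)
            + t * (φ lam (q : ℤ) * Θp lam 0 + ϕv * Φp lam 0)
            + θ lam ((q : ℤ) + 1) * Φp lam 0)
       let Atv : ℂ := (1 / 2) * (r * Φp lam 1 + t * Φp lam 0 - Θp lam 0
            - (2 * ϕv / φ lam (q : ℤ)) * Φp lam 0) - 1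
       let Jtv : ℂ := -(r * φ lam (q : ℤ) * Θp lam 1 + ϕv * (r * Φp lam 1 - Θp lam 0)
            + t * (φ lam (q : ℤ) * Θp lam 0 + ϕv * Φp lam 0)
            - ((ϕv ^ 2 - (1 - Δv ^ 2)) / φ lam (q : ℤ)) * Φp lam 0)
       4 * (1 - Δv ^ 2) * (1 + Av) ^ 2 + Jv ^ 2
         = 4 * (1 - Δv ^ 2) + 4 * (1 - Δv ^ 2) * (1 + Atv) ^ 2 + Jtv ^ 2) := by
  intro lam hP
  have ha00 : ((a0 0 : ℝ) : ℂ) ≠ 0 := by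
    exact_mod_cast ne_of_gt (ha0 0)
  -- unperturbed Wronskian constancy over one period
  have hW0 : Wron (fun n => (a0 n : ℂ)) (θ lam) (φ lam) ((q : ℕ) : ℤ)
      = Wron (fun n => (a0 n : ℂ)) (θ lam) (φ lam) 0 :=
    wron_const _ _ lam _ _ (hθ lam) (hφ lam) q
  have hWzero : Wron (fun n => (a0 n : ℂ)) (θ lam) (φ lam) 0 = ((a0 0 : ℝ) : ℂ) := by
    unfold Wron
    norm_num [hθ0 lam, hθ1 lam, hφ0 lam, hφ1 lam]
  have haq : a0 (q : ℤ) = a0 0 := by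
    have := hpa 0; simpa using this
  have h1 : θ lam (q : ℤ) * φ lam ((q : ℤ) + 1) - θ lam ((q : ℤ) + 1) * φ lam (q : ℤ) = 1 := by
    have h := hW0
    rw [hWzero] at h
    unfold Wron at h
    simp only at h
    rw [show ((a0 (q : ℤ) : ℝ) : ℂ) = ((a0 0 : ℝ) : ℂ) from by rw [haq]] at h
    exact mul_left_cancel₀ ha00 (by rw [mul_one]; exact h)
  -- perturbed Wronskian
  have hWp : Wron (fun n => ((a0 n + u n : ℝ) : ℂ)) (Θp lam) (Φp lam) (((p + 1 : ℕ)) : ℤ)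
      = Wron (fun n => ((a0 n + u n : ℝ) : ℂ)) (Θp lam) (Φp lam) 0 :=
    wron_const _ _ lam _ _ (hΘp lam) (hΦp lam) (p + 1)
  have hWup : Wron (fun n => (a0 n : ℂ)) (θ lam) (φ lam) (((p + 1 : ℕ)) : ℤ)
      = ((a0 0 : ℝ) : ℂ) := by
    rw [wron_const _ _ lam _ _ (hθ lam) (hφ lam) (p + 1), hWzero]
  have hup1 : u ((p : ℤ) + 1) = 0 := (hsupp ((p : ℤ) + 1) (Or.inr (by linarith))).1
  have hcast : (((p + 1 : ℕ)) : ℤ) = (p : ℤ) + 1 := by push_cast; ring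
  have h2' : ((a0 0 + u 0 : ℝ) : ℂ)
      * (Θp lam 0 * Φp lam 1 - Θp lam 1 * Φp lam 0) = ((a0 0 : ℝ) : ℂ) := by
    have h := hWp
    rw [hcast] at h
    unfold Wron at h
    simp only [zero_add] at h
    rw [hΘpb lam ((p : ℤ) + 1) le_rfl, hΦpb lam ((p : ℤ) + 1) le_rfl,
        hΘpb lam ((p : ℤ) + 1 + 1) (by linarith), hΦpb lam ((p : ℤ) + 1 + 1) (by linarith)] at h
    rw [show ((a0 ((p : ℤ) + 1) + u ((p : ℤ) + 1) : ℝ) : ℂ) = ((a0 ((p : ℤ) + 1) : ℝ) : ℂ)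
        from by rw [hup1]; norm_num] at h
    have h' := hWup
    rw [hcast] at h'
    unfold Wron at h'
    simp only at h'
    exact h.symm.trans h'
  have h2 : (((a0 0 + u 0 : ℝ) : ℂ) / ((a0 0 : ℝ) : ℂ))
      * (Θp lam 0 * Φp lam 1 - Θp lam 1 * Φp lam 0) = 1 := by
    rw [div_mul_eq_mul_div, h2', div_self ha00]
  exact key_alg (φ lam (q : ℤ)) (θ lam (q : ℤ)) (φ lam ((q : ℤ) + 1)) (θ lam ((q : ℤ) + 1))
    (Θp lam 0) (Θp lam 1) (Φp lam 0) (Φp lam 1)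
    (((a0 0 + u 0 : ℝ) : ℂ) / ((a0 0 : ℝ) : ℂ)) (((v 0 : ℝ) : ℂ) / ((a0 0 : ℝ) : ℂ))
    hP h1 h2
end

section
/- For every real λ with Δ(λ)² ≤ 1: 4(1 − Δ(λ)²)(1 + A(λ))² + J(λ)² ≥ 4(1 − Δ(λ)²). (This is the bound |ŵ|² ≥ |2Ω|² on the absolutely continuous spectrum, where ŵ = 2iΩ(1+A) − J and Ω² = 1 − Δ².) -/
open ComplexOrder

/-- Uniqueness of solutions of the Jacobi equation with two prescribed consecutive values. -/
lemma jacobi_unique {a b : ℤ → ℂ} {lam : ℂ} (ha : ∀ n, a n ≠ 0) {y z : ℤ → ℂ}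
    (hy : JacobiSol a b lam y) (hz : JacobiSol a b lam z) (n0 : ℤ)
    (h0 : y n0 = z n0) (h1 : y (n0 + 1) = z (n0 + 1)) : ∀ n, y n = z n := by
  have step_up : ∀ n : ℤ, y (n - 1) = z (n - 1) → y n = z n → y (n + 1) = z (n + 1) := by
    intro n e1 e2
    have h := hy n
    have h' := hz n
    apply mul_left_cancel₀ (ha n)
    linear_combination h - h' - a (n - 1) * e1 - b n * e2 + lam * e2
  have step_down : ∀ n : ℤ, y n = z n → y (n + 1) = z (n + 1) → y (n - 1) = z (n - 1) := by
    intro n e2 e3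
    have h := hy n
    have h' := hz n
    apply mul_left_cancel₀ (ha (n - 1))
    linear_combination h - h' - a n * e3 - b n * e2 + lam * e2
  have up : ∀ k : ℕ, y (n0 + (k : ℤ)) = z (n0 + (k : ℤ)) ∧
      y (n0 + (k : ℤ) + 1) = z (n0 + (k : ℤ) + 1) := by
    intro k
    induction k with
    | zero => simpa using ⟨h0, h1⟩
    | succ m ih =>
      have hidx : n0 + ((m + 1 : ℕ) : ℤ) = n0 + (m : ℤ) + 1 := by push_cast; ring
      constructor
      · rw [hidx]; exact ih.2
      · rw [hidx]
        refine step_up (n0 + (m : ℤ) + 1) ?_ ih.2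
        have hidx2 : n0 + (m : ℤ) + 1 - 1 = n0 + (m : ℤ) := by ring
        rw [hidx2]; exact ih.1
  have down : ∀ k : ℕ, y (n0 - (k : ℤ)) = z (n0 - (k : ℤ)) ∧
      y (n0 - (k : ℤ) + 1) = z (n0 - (k : ℤ) + 1) := by
    intro k
    induction k with
    | zero => simpa using ⟨h0, h1⟩
    | succ m ih =>
      have hidx : n0 - ((m + 1 : ℕ) : ℤ) = n0 - (m : ℤ) - 1 := by push_cast; ring
      have hidx3 : n0 - (m : ℤ) - 1 + 1 = n0 - (m : ℤ) := by ring
      constructor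
      · rw [hidx]
        exact step_down (n0 - (m : ℤ)) ih.1 ih.2
      · rw [hidx, hidx3]; exact ih.1
  intro n
  rcases le_or_gt n0 n with h | h
  · have : n = n0 + ((n - n0).toNat : ℤ) := by omega
    rw [this]; exact (up (n - n0).toNat).1
  · have : n = n0 - ((n0 - n).toNat : ℤ) := by omega
    rw [this]; exact (down (n0 - n).toNat).1

/-- The Wronskian of two solutions is constant: one step. -/
lemma wron_succ {a b : ℤ → ℂ} {lam : ℂ} {f g : ℤ → ℂ}
    (hf : JacobiSol a b lam f) (hg : JacobiSol a b lam g) (n : ℤ) :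
    Wron a f g (n + 1) = Wron a f g n := by
  have h1 := hf (n + 1)
  have h2 := hg (n + 1)
  have hidx : n + 1 - 1 = n := by ring
  rw [hidx] at h1 h2
  simp only [Wron]
  linear_combination f (n + 1) * h2 - g (n + 1) * h1

/-- The Wronskian of two solutions is constant: natural shift. -/
lemma wron_shift {a b : ℤ → ℂ} {lam : ℂ} {f g : ℤ → ℂ}
    (hf : JacobiSol a b lam f) (hg : JacobiSol a b lam g) (n0 : ℤ) :
    ∀ k : ℕ, Wron a f g (n0 + (k : ℤ)) = Wron a f g n0 := by
  intro k
  induction k with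
  | zero => simp
  | succ m ih =>
    have hidx : n0 + ((m + 1 : ℕ) : ℤ) = n0 + (m : ℤ) + 1 := by push_cast; ring
    rw [hidx, wron_succ hf hg]
    exact ih

/-- A solution of a Jacobi equation with real coefficients, a real spectral parameter and two
consecutive real values is real (conjugation-invariant) everywhere. -/
lemma jacobi_real {a b : ℤ → ℝ} (ha : ∀ n, (a n : ℂ) ≠ 0) (lam : ℝ) {y : ℤ → ℂ}
    (hy : JacobiSol (fun n => (a n : ℂ)) (fun n => (b n : ℂ)) (lam : ℂ) y)
    (n0 : ℤ) (h0 : (starRingEnd ℂ) (y n0) = y n0) (h1 : (starRingEnd ℂ) (y (n0 + 1)) = y (n0 + 1)) :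
    ∀ n, (starRingEnd ℂ) (y n) = y n := by
  have hconj : JacobiSol (fun n => (a n : ℂ)) (fun n => (b n : ℂ)) (lam : ℂ)
      (fun n => (starRingEnd ℂ) (y n)) := by
    intro n
    have h := congrArg (starRingEnd ℂ) (hy n)
    simpa [map_add, map_mul, Complex.conj_ofReal] using h
  exact jacobi_unique ha hconj hy n0 h0 h1

set_option maxHeartbeats 1600000 in
/-- The key real inequality, obtained from an exact sum-of-squares identity modulo the two
Wronskian constraints. -/
lemma key_real (tq tq1 fq fq1 T0 T1 F0 F1 r t : ℝ)
    (c1 : tq * fq1 - tq1 * fq = 1) (c2 : r * (T0 * F1 - T1 * F0) = 1)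
    (hD : ((fq1 + tq) / 2) ^ 2 ≤ 1) :
    4 * (1 - ((fq1 + tq) / 2) ^ 2) ≤
      4 * (1 - ((fq1 + tq) / 2) ^ 2) * (1 + ((1 / 2) * (r * F1 + t * F0 + T0) - 1)) ^ 2 +
      (-(r * fq * T1 + ((fq1 - tq) / 2) * (r * F1 - T0) + t * (fq * T0 + ((fq1 - tq) / 2) * F0)
          + tq1 * F0)) ^ 2 := by
  rcases eq_or_ne fq 0 with hfq | hfq
  · subst hfq
    have h0 : 1 - ((fq1 + tq) / 2) ^ 2 = 0 := by nlinarith [sq_nonneg (fq1 - tq)]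
    nlinarith [h0, sq_nonneg (1 + ((1 / 2) * (r * F1 + t * F0 + T0) - 1)),
      sq_nonneg (-(r * 0 * T1 + ((fq1 - tq) / 2) * (r * F1 - T0)
        + t * (0 * T0 + ((fq1 - tq) / 2) * F0) + tq1 * F0))]
  · set Y : ℝ := fq * (r * F1 + t * F0 - T0) - 2 * ((fq1 - tq) / 2) * F0 with hY
    set X : ℝ := fq ^ 2 * (r * T1 + t * T0) - fq * tq1 * F0 + ((fq1 - tq) / 2) * Y with hX
    have key : fq ^ 2 * (4 * (1 - ((fq1 + tq) / 2) ^ 2)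
          * (1 + ((1 / 2) * (r * F1 + t * F0 + T0) - 1)) ^ 2
        + (-(r * fq * T1 + ((fq1 - tq) / 2) * (r * F1 - T0)
            + t * (fq * T0 + ((fq1 - tq) / 2) * F0) + tq1 * F0)) ^ 2
        - 4 * (1 - ((fq1 + tq) / 2) ^ 2))
        = X ^ 2 + (1 - ((fq1 + tq) / 2) ^ 2) * Y ^ 2 := by
      rw [hX, hY]
      linear_combination
        (fq1 ^ 2 * F0 ^ 2 - 2 * fq * fq1 * F0 * F1 * r - 2 * fq * fq1 * F0 ^ 2 * t
          + 2 * fq * fq1 * T0 * F0 - 4 * fq ^ 2 * T1 * F0 * r - 4 * fq ^ 2 * T0 * F0 * t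
          - 2 * tq * fq1 * F0 ^ 2 + 2 * tq * fq * F0 * F1 * r + 2 * tq * fq * F0 ^ 2 * t
          - 2 * tq * fq * T0 * F0 + tq ^ 2 * F0 ^ 2) * c1
        + (4 * fq ^ 2 - fq ^ 2 * fq1 ^ 2 - 2 * tq * fq ^ 2 * fq1 - tq ^ 2 * fq ^ 2) * c2
    have hXn : 0 ≤ X ^ 2 := sq_nonneg X
    have hYn : 0 ≤ (1 - ((fq1 + tq) / 2) ^ 2) * Y ^ 2 :=
      mul_nonneg (by linarith) (sq_nonneg Y)
    have hfq2 : 0 < fq ^ 2 := by positivity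
    nlinarith [key, hXn, hYn, hfq2]

/-- On the a.c. spectrum (`λ` real, `Δ(λ)² ≤ 1`) one has
`4(1−Δ²)(1+A)² + J² ≥ 4(1−Δ²)`, i.e. `|ŵ|² ≥ |2Ω|²` (inequality in the partial order of `ℂ`;
all quantities are real for real `λ`). -/
theorem w_hat_lower_bound_on_spectrum
    (q : ℕ) (hq : 2 ≤ q) (a0 b0 : ℤ → ℝ)
    (hpa : ∀ n : ℤ, a0 (n + (q : ℤ)) = a0 n) (hpb : ∀ n : ℤ, b0 (n + (q : ℤ)) = b0 n)
    (ha0 : ∀ n : ℤ, 0 < a0 n) (hprod : ∏ j ∈ Finset.Icc (1 : ℤ) (q : ℤ), a0 j = 1)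
    (θ φ : ℂ → ℤ → ℂ)
    (hθ : ∀ lam : ℂ, JacobiSol (fun n => (a0 n : ℂ)) (fun n => (b0 n : ℂ)) lam (θ lam))
    (hθ0 : ∀ lam : ℂ, θ lam 0 = 1) (hθ1 : ∀ lam : ℂ, θ lam 1 = 0)
    (hφ : ∀ lam : ℂ, JacobiSol (fun n => (a0 n : ℂ)) (fun n => (b0 n : ℂ)) lam (φ lam))
    (hφ0 : ∀ lam : ℂ, φ lam 0 = 0) (hφ1 : ∀ lam : ℂ, φ lam 1 = 1)
    (p : ℕ) (hp : 1 ≤ p) (u v : ℤ → ℝ)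
    (hsupp : ∀ n : ℤ, (n < 0 ∨ (p : ℤ) < n) → u n = 0 ∧ v n = 0)
    (hapos : ∀ n : ℤ, 0 < a0 n + u n)
    (Θp Φp : ℂ → ℤ → ℂ)
    (hΘp : ∀ lam : ℂ, JacobiSol (fun n => ((a0 n + u n : ℝ) : ℂ))
      (fun n => ((b0 n + v n : ℝ) : ℂ)) lam (Θp lam))
    (hΘpb : ∀ lam : ℂ, ∀ n : ℤ, (p : ℤ) + 1 ≤ n → Θp lam n = θ lam n)
    (hΦp : ∀ lam : ℂ, JacobiSol (fun n => ((a0 n + u n : ℝ) : ℂ))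
      (fun n => ((b0 n + v n : ℝ) : ℂ)) lam (Φp lam))
    (hΦpb : ∀ lam : ℂ, ∀ n : ℤ, (p : ℤ) + 1 ≤ n → Φp lam n = φ lam n)
    :
    ∀ lam : ℝ,
      (let Δv : ℂ := (φ (lam : ℂ) ((q : ℤ) + 1) + θ (lam : ℂ) (q : ℤ)) / 2
       let ϕv : ℂ := (φ (lam : ℂ) ((q : ℤ) + 1) - θ (lam : ℂ) (q : ℤ)) / 2
       let r : ℂ := ((a0 0 + u 0 : ℝ) : ℂ) / ((a0 0 : ℝ) : ℂ)
       let t : ℂ := ((v 0 : ℝ) : ℂ) / ((a0 0 : ℝ) : ℂ)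
       let Av : ℂ := (1 / 2) * (r * Φp (lam : ℂ) 1 + t * Φp (lam : ℂ) 0 + Θp (lam : ℂ) 0) - 1
       let Jv : ℂ := -(r * φ (lam : ℂ) (q : ℤ) * Θp (lam : ℂ) 1
            + ϕv * (r * Φp (lam : ℂ) 1 - Θp (lam : ℂ) 0)
            + t * (φ (lam : ℂ) (q : ℤ) * Θp (lam : ℂ) 0 + ϕv * Φp (lam : ℂ) 0)
            + θ (lam : ℂ) ((q : ℤ) + 1) * Φp (lam : ℂ) 0)
       Δv ^ 2 ≤ 1 →
       4 * (1 - Δv ^ 2) ≤ 4 * (1 - Δv ^ 2) * (1 + Av) ^ 2 + Jv ^ 2) := by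
  intro lam
  intro Δv ϕv r t Av Jv hΔ
  have hΔv : Δv = (φ (lam : ℂ) ((q : ℤ) + 1) + θ (lam : ℂ) (q : ℤ)) / 2 := rfl
  have hϕv : ϕv = (φ (lam : ℂ) ((q : ℤ) + 1) - θ (lam : ℂ) (q : ℤ)) / 2 := rfl
  have hrv : r = ((a0 0 + u 0 : ℝ) : ℂ) / ((a0 0 : ℝ) : ℂ) := rfl
  have htv : t = ((v 0 : ℝ) : ℂ) / ((a0 0 : ℝ) : ℂ) := rfl
  have hAv : Av = (1 / 2) * (r * Φp (lam : ℂ) 1 + t * Φp (lam : ℂ) 0 + Θp (lam : ℂ) 0) - 1 := rfl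
  have hJv : Jv = -(r * φ (lam : ℂ) (q : ℤ) * Θp (lam : ℂ) 1
            + ϕv * (r * Φp (lam : ℂ) 1 - Θp (lam : ℂ) 0)
            + t * (φ (lam : ℂ) (q : ℤ) * Θp (lam : ℂ) 0 + ϕv * Φp (lam : ℂ) 0)
            + θ (lam : ℂ) ((q : ℤ) + 1) * Φp (lam : ℂ) 0) := rfl
  -- nonvanishing of coefficients
  have ha0C : ∀ n : ℤ, ((a0 n : ℝ) : ℂ) ≠ 0 := fun n =>
    Complex.ofReal_ne_zero.mpr (ha0 n).ne'
  have haC : ∀ n : ℤ, ((a0 n + u n : ℝ) : ℂ) ≠ 0 := fun n =>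
    Complex.ofReal_ne_zero.mpr (hapos n).ne'
  -- reality of the unperturbed fundamental solutions
  have hθreal : ∀ n, (starRingEnd ℂ) (θ (lam : ℂ) n) = θ (lam : ℂ) n := by
    refine jacobi_real ha0C lam (hθ (lam : ℂ)) 0 ?_ ?_
    · rw [hθ0]; simp
    · show (starRingEnd ℂ) (θ (lam : ℂ) (0 + 1)) = θ (lam : ℂ) (0 + 1)
      norm_num [hθ1]
  have hφreal : ∀ n, (starRingEnd ℂ) (φ (lam : ℂ) n) = φ (lam : ℂ) n := by
    refine jacobi_real ha0C lam (hφ (lam : ℂ)) 0 ?_ ?_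
    · rw [hφ0]; simp
    · show (starRingEnd ℂ) (φ (lam : ℂ) (0 + 1)) = φ (lam : ℂ) (0 + 1)
      norm_num [hφ1]
  -- reality of the perturbed fundamental solutions
  have hΘreal : ∀ n, (starRingEnd ℂ) (Θp (lam : ℂ) n) = Θp (lam : ℂ) n := by
    refine jacobi_real haC lam (hΘp (lam : ℂ)) ((p : ℤ) + 1) ?_ ?_
    · rw [hΘpb (lam : ℂ) ((p : ℤ) + 1) le_rfl]; exact hθreal _
    · rw [hΘpb (lam : ℂ) ((p : ℤ) + 1 + 1) (by omega)]; exact hθreal _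
  have hΦreal : ∀ n, (starRingEnd ℂ) (Φp (lam : ℂ) n) = Φp (lam : ℂ) n := by
    refine jacobi_real haC lam (hΦp (lam : ℂ)) ((p : ℤ) + 1) ?_ ?_
    · rw [hΦpb (lam : ℂ) ((p : ℤ) + 1) le_rfl]; exact hφreal _
    · rw [hΦpb (lam : ℂ) ((p : ℤ) + 1 + 1) (by omega)]; exact hφreal _
  -- real values
  set tqR : ℝ := (θ (lam : ℂ) (q : ℤ)).re with htqR
  set tq1R : ℝ := (θ (lam : ℂ) ((q : ℤ) + 1)).re with htq1R
  set fqR : ℝ := (φ (lam : ℂ) (q : ℤ)).re with hfqR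
  set fq1R : ℝ := (φ (lam : ℂ) ((q : ℤ) + 1)).re with hfq1R
  set T0R : ℝ := (Θp (lam : ℂ) 0).re with hT0R
  set T1R : ℝ := (Θp (lam : ℂ) 1).re with hT1R
  set F0R : ℝ := (Φp (lam : ℂ) 0).re with hF0R
  set F1R : ℝ := (Φp (lam : ℂ) 1).re with hF1R
  have etq : θ (lam : ℂ) (q : ℤ) = (tqR : ℂ) := (Complex.conj_eq_iff_re.mp (hθreal _)).symm
  have etq1 : θ (lam : ℂ) ((q : ℤ) + 1) = (tq1R : ℂ) :=
    (Complex.conj_eq_iff_re.mp (hθreal _)).symm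
  have efq : φ (lam : ℂ) (q : ℤ) = (fqR : ℂ) := (Complex.conj_eq_iff_re.mp (hφreal _)).symm
  have efq1 : φ (lam : ℂ) ((q : ℤ) + 1) = (fq1R : ℂ) :=
    (Complex.conj_eq_iff_re.mp (hφreal _)).symm
  have eT0 : Θp (lam : ℂ) 0 = (T0R : ℂ) := (Complex.conj_eq_iff_re.mp (hΘreal _)).symm
  have eT1 : Θp (lam : ℂ) 1 = (T1R : ℂ) := (Complex.conj_eq_iff_re.mp (hΘreal _)).symm
  have eF0 : Φp (lam : ℂ) 0 = (F0R : ℂ) := (Complex.conj_eq_iff_re.mp (hΦreal _)).symm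
  have eF1 : Φp (lam : ℂ) 1 = (F1R : ℂ) := (Complex.conj_eq_iff_re.mp (hΦreal _)).symm
  -- Wronskian constraint for the unperturbed solutions
  have hW0 : ∀ k : ℕ, Wron (fun n => (a0 n : ℂ)) (θ (lam : ℂ)) (φ (lam : ℂ)) (0 + (k : ℤ))
      = Wron (fun n => (a0 n : ℂ)) (θ (lam : ℂ)) (φ (lam : ℂ)) 0 :=
    wron_shift (hθ (lam : ℂ)) (hφ (lam : ℂ)) 0
  have hWron0 : Wron (fun n => (a0 n : ℂ)) (θ (lam : ℂ)) (φ (lam : ℂ)) 0 = ((a0 0 : ℝ) : ℂ) := by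
    simp only [Wron, zero_add, hθ0, hθ1, hφ0, hφ1]
    ring
  have hc1C : θ (lam : ℂ) (q : ℤ) * φ (lam : ℂ) ((q : ℤ) + 1)
      - θ (lam : ℂ) ((q : ℤ) + 1) * φ (lam : ℂ) (q : ℤ) = 1 := by
    have e := hW0 q
    rw [zero_add, hWron0] at e
    have haq : ((a0 (q : ℤ) : ℝ) : ℂ) = ((a0 0 : ℝ) : ℂ) := by
      have := hpa 0
      rw [zero_add] at this
      exact_mod_cast congrArg (fun x : ℝ => (x : ℂ)) this
    simp only [Wron] at e
    rw [haq] at e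
    have := mul_left_cancel₀ (ha0C 0) (by rw [e]; ring : ((a0 0 : ℝ) : ℂ)
      * (θ (lam : ℂ) (q : ℤ) * φ (lam : ℂ) ((q : ℤ) + 1)
        - θ (lam : ℂ) ((q : ℤ) + 1) * φ (lam : ℂ) (q : ℤ)) = ((a0 0 : ℝ) : ℂ) * 1)
    exact this
  -- Wronskian constraint for the perturbed solutions
  have hc2C : ((a0 0 + u 0 : ℝ) : ℂ) * (Θp (lam : ℂ) 0 * Φp (lam : ℂ) 1
      - Θp (lam : ℂ) 1 * Φp (lam : ℂ) 0) = ((a0 0 : ℝ) : ℂ) := by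
    have hWp : ∀ k : ℕ, Wron (fun n => ((a0 n + u n : ℝ) : ℂ)) (Θp (lam : ℂ)) (Φp (lam : ℂ))
        (0 + (k : ℤ)) = Wron (fun n => ((a0 n + u n : ℝ) : ℂ)) (Θp (lam : ℂ)) (Φp (lam : ℂ)) 0 :=
      wron_shift (hΘp (lam : ℂ)) (hΦp (lam : ℂ)) 0
    have e := hWp (p + 1)
    have hidx : (0 : ℤ) + ((p + 1 : ℕ) : ℤ) = (p : ℤ) + 1 := by push_cast; ring
    rw [hidx] at e
    have hup1 : u ((p : ℤ) + 1) = 0 := (hsupp ((p : ℤ) + 1) (Or.inr (by omega))).1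
    have eθb1 := hΘpb (lam : ℂ) ((p : ℤ) + 1) le_rfl
    have eθb2 := hΘpb (lam : ℂ) ((p : ℤ) + 1 + 1) (by omega)
    have eφb1 := hΦpb (lam : ℂ) ((p : ℤ) + 1) le_rfl
    have eφb2 := hΦpb (lam : ℂ) ((p : ℤ) + 1 + 1) (by omega)
    have e2 : Wron (fun n => ((a0 n + u n : ℝ) : ℂ)) (Θp (lam : ℂ)) (Φp (lam : ℂ)) ((p : ℤ) + 1)
        = Wron (fun n => (a0 n : ℂ)) (θ (lam : ℂ)) (φ (lam : ℂ)) ((p : ℤ) + 1) := by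
      simp only [Wron, eθb1, eθb2, eφb1, eφb2, hup1]
      norm_num
    have e3 := hW0 (p + 1)
    rw [hidx] at e3
    rw [e2, e3, hWron0] at e
    simpa [Wron] using e.symm
  -- real constraints
  have c1R : tqR * fq1R - tq1R * fqR = 1 := by
    have := hc1C
    rw [etq, etq1, efq, efq1] at this
    exact_mod_cast this
  have c2R : ((a0 0 + u 0) / a0 0) * (T0R * F1R - T1R * F0R) = 1 := by
    have := hc2C
    rw [eT0, eT1, eF0, eF1] at this
    have h' : (a0 0 + u 0) * (T0R * F1R - T1R * F0R) = a0 0 := by exact_mod_cast this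
    rw [div_mul_eq_mul_div, div_eq_one_iff_eq (ha0 0).ne']
    linear_combination h'
  -- coercion of r and t
  have hrR : r = (((a0 0 + u 0) / a0 0 : ℝ) : ℂ) := by rw [hrv]; push_cast; ring
  have htR : t = ((v 0 / a0 0 : ℝ) : ℂ) := by rw [htv]; push_cast; ring
  -- hypothesis in real form
  have hDR : ((fq1R + tqR) / 2) ^ 2 ≤ 1 := by
    have e : Δv ^ 2 = ((((fq1R + tqR) / 2) ^ 2 : ℝ) : ℂ) := by
      rw [hΔv, efq1, etq]; push_cast; ring
    have h' : ((((fq1R + tqR) / 2) ^ 2 : ℝ) : ℂ) ≤ ((1 : ℝ) : ℂ) := by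
      rw [← e]; simpa using hΔ
    exact Complex.real_le_real.mp h'
  -- the real inequality
  have hkey := key_real tqR tq1R fqR fq1R T0R T1R F0R F1R ((a0 0 + u 0) / a0 0) (v 0 / a0 0)
    c1R c2R hDR
  -- transfer to ℂ
  have egoal1 : 4 * (1 - Δv ^ 2) = ((4 * (1 - ((fq1R + tqR) / 2) ^ 2) : ℝ) : ℂ) := by
    rw [hΔv, efq1, etq]; push_cast; ring
  have egoal2 : 4 * (1 - Δv ^ 2) * (1 + Av) ^ 2 + Jv ^ 2
      = ((4 * (1 - ((fq1R + tqR) / 2) ^ 2)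
          * (1 + ((1 / 2) * (((a0 0 + u 0) / a0 0) * F1R + (v 0 / a0 0) * F0R + T0R) - 1)) ^ 2
        + (-(((a0 0 + u 0) / a0 0) * fqR * T1R
            + ((fq1R - tqR) / 2) * (((a0 0 + u 0) / a0 0) * F1R - T0R)
            + (v 0 / a0 0) * (fqR * T0R + ((fq1R - tqR) / 2) * F0R)
            + tq1R * F0R)) ^ 2 : ℝ) : ℂ) := by
    rw [hΔv, hAv, hJv, hϕv, hrR, htR, efq1, etq, etq1, efq, eT0, eT1, eF0, eF1]
    push_cast
    ring
  rw [egoal2, egoal1]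
  exact Complex.real_le_real.mpr hkey
end
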